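/- Let Q be a poset with finite downsets, suppose the set I_Q of elements with disconnected strict downset is finite, and let F : C → Q be a minimal initial functor (i.e., among all initial functors into Q, C has the minimum number of objects and the minimum number of morphisms). Then F is faithful and injective on objects, and its image is an initial scaffold of Q. -/

import Mathlib

open CategoryTheory

/-- A single comparability step within `S` with respect to the relation `r`. -/
def StepIn {α : Type*} (S : Set α) (r : α → α → Prop) (x y : α) : Prop :=
  x ∈ S ∧ y ∈ S ∧ (r x y ∨ r y x)

/-- Connectivity of the set `S` equipped with the relation `r`: `S` is nonempty and any
two elements of `S` are joined by a finite zigzag of `r`-steps within `S`. -/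
def ConnIn {α : Type*} (S : Set α) (r : α → α → Prop) : Prop :=
  S.Nonempty ∧ ∀ a ∈ S, ∀ b ∈ S, Relation.ReflTransGen (StepIn S r) a b

/-- Connectivity of a subset of a poset, as a subposet (zigzags of comparabilities). -/
def PosetConn {α : Type*} [LE α] (S : Set α) : Prop := ConnIn S (· ≤ ·)

/-- `a` and `b` lie in `S` in the same connected component of the subposet `S`. -/
def SameComp {α : Type*} [LE α] (S : Set α) (a b : α) : Prop :=
  a ∈ S ∧ b ∈ S ∧ Relation.ReflTransGen (StepIn S (· ≤ ·)) a b

/-- An initial scaffold of the poset `α`: a subposet whose elements are exactly the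
elements with disconnected (possibly empty) strict downset, and whose non-identity
relations `r` consist, for each such element `b` and each connected component of the
strict downset of `b`, of exactly one relation `m < b` with `m` a minimum of `α` in
that component. -/
def IsScaffold {α : Type*} [PartialOrder α] (P : Set α) (r : α → α → Prop) : Prop :=
  P = {q | ¬ PosetConn (Set.Iio q)} ∧
  (∀ a b, r a b → IsMin a ∧ a < b ∧ b ∈ P) ∧
  (∀ b ∈ P, ∀ x ∈ Set.Iio b, ∃! m, r m b ∧ SameComp (Set.Iio b) m x)

namespace Stmt18

variable {Q : Type} [PartialOrder Q]

/-- elements with disconnected strict downset -/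
def IQ (Q : Type) [PartialOrder Q] : Set Q := {q | ¬ PosetConn (Set.Iio q)}

/-- component of `x` in `Iio q` -/
def KK (q x : Q) : Set Q :=
  {y | y ∈ Set.Iio q ∧ Relation.ReflTransGen (StepIn (Set.Iio q) (· ≤ ·)) y x}

lemma stepIn_symm {S : Set Q} {x y : Q} (h : StepIn S (· ≤ ·) x y) : StepIn S (· ≤ ·) y x :=
  ⟨h.2.1, h.1, h.2.2.symm⟩

lemma rtg_stepIn_symm {S : Set Q} {x y : Q}
    (h : Relation.ReflTransGen (StepIn S (· ≤ ·)) x y) :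
    Relation.ReflTransGen (StepIn S (· ≤ ·)) y x := by
  induction h with
  | refl => exact .refl
  | tail _ hstep ih => exact Relation.ReflTransGen.trans (.single (stepIn_symm hstep)) ih

lemma KK_sub_Iio {q x : Q} : KK q x ⊆ Set.Iio q := fun _ h => h.1

lemma mem_KK_self {q x : Q} (h : x < q) : x ∈ KK q x := ⟨h, .refl⟩

lemma KK_of_step {q x y z : Q} (hy : y ∈ KK q x) (hz : StepIn (Set.Iio q) (· ≤ ·) z y) :
    z ∈ KK q x := ⟨hz.1, .trans (.single hz) hy.2⟩

lemma KK_of_rtg {q x y z : Q} (hy : y ∈ KK q x)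
    (hz : Relation.ReflTransGen (StepIn (Set.Iio q) (· ≤ ·)) z y) (hz' : z ∈ Set.Iio q) :
    z ∈ KK q x := ⟨hz', hz.trans hy.2⟩

lemma KK_eq_of_mem {q x y : Q} (hy : y ∈ KK q x) : KK q y = KK q x := by
  ext z
  constructor
  · intro hz; exact ⟨hz.1, hz.2.trans hy.2⟩
  · intro hz; exact ⟨hz.1, hz.2.trans (rtg_stepIn_symm hy.2)⟩

open Classical in
/-- pick a minimal element of `S`, with default `d` -/
noncomputable def pickMin (S : Set Q) (d : Q) : Q :=
  if h : ∃ m ∈ S, ∀ y ∈ S, ¬ y < m then h.choose else d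

lemma pickMin_spec {S : Set Q} (hfS : S.Finite) (hne : S.Nonempty) (d : Q) :
    pickMin S d ∈ S ∧ ∀ y ∈ S, ¬ y < pickMin S d := by
  have h : ∃ m ∈ S, ∀ y ∈ S, ¬ y < m := by
    obtain ⟨a, ha⟩ := Set.Finite.exists_minimal hfS hne
    exact ⟨a, ha.prop, fun y hy hlt => ha.not_lt hy hlt⟩
  rw [pickMin]
  rw [dif_pos h]
  exact ⟨h.choose_spec.1, h.choose_spec.2⟩

/-- the chosen minimum of the component of `x` in `Iio q` -/
noncomputable def mu (q x : Q) : Q := pickMin (KK q x) q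

section
variable (hfin : ∀ q : Q, (Set.Iic q).Finite)
include hfin

lemma KK_finite (q x : Q) : (KK q x).Finite :=
  (hfin q).subset (fun y hy => le_of_lt (KK_sub_Iio hy))

lemma mu_mem {q x : Q} (hx : x < q) : mu q x ∈ KK q x :=
  (pickMin_spec (KK_finite hfin q x) ⟨x, mem_KK_self hx⟩ q).1

lemma mu_not_lt {q x : Q} (hx : x < q) : ∀ y ∈ KK q x, ¬ y < mu q x :=
  (pickMin_spec (KK_finite hfin q x) ⟨x, mem_KK_self hx⟩ q).2

lemma mu_lt {q x : Q} (hx : x < q) : mu q x < q := KK_sub_Iio (mu_mem hfin hx)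

lemma mu_isMin {q x : Q} (hx : x < q) : IsMin (mu q x) := by
  intro z hz
  by_contra hzz
  have hlt : z < mu q x := lt_of_le_not_ge hz hzz
  have hzq : z ∈ Set.Iio q := lt_trans hlt (mu_lt hfin hx)
  have hzK : z ∈ KK q x :=
    KK_of_step (mu_mem hfin hx) ⟨hzq, KK_sub_Iio (mu_mem hfin hx), Or.inl hlt.le⟩
  exact mu_not_lt hfin hx z hzK hlt

end

lemma mu_congr {q x y : Q} (hy : y ∈ KK q x) : mu q y = mu q x := by
  unfold mu
  rw [KK_eq_of_mem hy]

lemma isMin_mem_IQ {m : Q} (hm : IsMin m) : m ∈ IQ Q := by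
  intro hconn
  obtain ⟨⟨y, hy⟩, -⟩ := hconn
  exact hm.not_lt hy

section
variable (hfin : ∀ q : Q, (Set.Iic q).Finite)
include hfin

/-- a minimal element below x -/
noncomputable def mbelow (x : Q) : Q := pickMin (Set.Iic x) x

lemma mbelow_le (x : Q) : mbelow x ≤ x :=
  (pickMin_spec (hfin x) ⟨x, le_refl x⟩ x).1

lemma mbelow_isMin (x : Q) : IsMin (mbelow x) := by
  intro z hz
  by_contra hzz
  have hlt : z < mbelow x := lt_of_le_not_ge hz hzz
  exact (pickMin_spec (hfin x) ⟨x, le_refl x⟩ x).2 z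
    (le_trans hz (mbelow_le hfin x)) hlt

lemma mbelow_mem_IQ (x : Q) : mbelow x ∈ IQ Q := isMin_mem_IQ (mbelow_isMin hfin x)

end


variable {Q : Type} [PartialOrder Q]

/-- the scaffold relation -/
def SRel (a b : Q) : Prop :=
  IsMin a ∧ a < b ∧ b ∈ IQ Q ∧ ∃ x, x < b ∧ a = mu b x

lemma SRel.not_comp {a b c : Q} (h1 : SRel a b) (h2 : SRel b c) : False :=
  absurd (h2.1 h1.2.1.le) (not_le_of_gt h1.2.1)

/-- objects of the scaffold category -/
def SOb (Q : Type) [PartialOrder Q] : Set Q := IQ Q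

instance : Category (SOb Q) where
  Hom a b := PLift (a = b ∨ SRel a.1 b.1)
  id a := ⟨Or.inl rfl⟩
  comp {a b c} f g := by
    refine ⟨?_⟩
    rcases f.down with h | h
    · rcases g.down with h' | h'
      · exact Or.inl (h.trans h')
      · exact Or.inr (h ▸ h')
    · rcases g.down with h' | h'
      · exact Or.inr (h' ▸ h)
      · exact (h.not_comp h').elim
  id_comp f := rfl
  comp_id f := rfl
  assoc f g h := rfl

/-- the inclusion functor from the scaffold category -/
def GS (Q : Type) [PartialOrder Q] : (SOb Q : Set Q) ⥤ Q where
  obj a := a.1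
  map {a b} f := homOfLE (by rcases f.down with h | h
                             · rw [h]
                             · exact h.2.1.le)
  map_id _ := Subsingleton.elim _ _
  map_comp _ _ := Subsingleton.elim _ _

/-- zigzag steps among scaffold elements below q -/
def SZag (q a b : Q) : Prop :=
  a ∈ IQ Q ∧ b ∈ IQ Q ∧ a ≤ q ∧ b ≤ q ∧ (a = b ∨ SRel a b ∨ SRel b a)

lemma SZag.symm {q a b : Q} (h : SZag q a b) : SZag q b a :=
  ⟨h.2.1, h.1, h.2.2.2.1, h.2.2.1, by rcases h.2.2.2.2 with h|h|h
                                      exacts [Or.inl h.symm, Or.inr (Or.inr h), Or.inr (Or.inl h)]⟩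

lemma rtg_szag_symm {q a b : Q} (h : Relation.ReflTransGen (SZag q) a b) :
    Relation.ReflTransGen (SZag q) b a := by
  induction h with
  | refl => exact .refl
  | tail _ hstep ih => exact Relation.ReflTransGen.trans (.single hstep.symm) ih

lemma szag_mono {q q' a b : Q} (hq : q ≤ q') (h : SZag q a b) : SZag q' a b :=
  ⟨h.1, h.2.1, h.2.2.1.trans hq, h.2.2.2.1.trans hq, h.2.2.2.2⟩

section
variable (hfin : ∀ q : Q, (Set.Iic q).Finite)
include hfin

lemma connAux : ∀ n (q : Q), (hfin q).toFinset.card ≤ n →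
    ∀ s, s ∈ IQ Q → s ≤ q → ∀ t, t ∈ IQ Q → t ≤ q →
      Relation.ReflTransGen (SZag q) s t := by
  intro n
  induction n with
  | zero =>
    intro q hcard
    exact absurd (Finset.card_pos.mpr ⟨q, (hfin q).mem_toFinset.mpr (le_refl q)⟩)
      (by omega)
  | succ n ih =>
    intro q hcard
    -- claim A
    have claimA : ∀ x, x < q → ∀ s, s ∈ IQ Q → s ≤ x → ∀ t, t ∈ IQ Q → t ≤ x →
        Relation.ReflTransGen (SZag q) s t := by
      intro x hx s hs hsx t ht htx
      have hsub : (hfin x).toFinset ⊂ (hfin q).toFinset := by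
        rw [Set.Finite.toFinset_ssubset_toFinset]
        exact ⟨fun y hy => le_trans hy hx.le, fun hsub => absurd (hsub (le_refl q)) (not_le_of_gt hx)⟩
      have hc : (hfin x).toFinset.card ≤ n := by
        have := Finset.card_lt_card hsub
        omega
      exact Relation.ReflTransGen.mono (by intro a b h; exact szag_mono hx.le h) _ _
        (ih x hc s hs hsx t ht htx)
    -- claim B
    have claimB : ∀ x y, x ∈ Set.Iio q →
        Relation.ReflTransGen (StepIn (Set.Iio q) (· ≤ ·)) x y →
        ∀ s, s ∈ IQ Q → s ≤ x → ∀ t, t ∈ IQ Q → t ≤ y →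
          Relation.ReflTransGen (SZag q) s t := by
      intro x y hxq hxy s hs hsx
      induction hxy with
      | refl => exact fun t ht hty => claimA x hxq s hs hsx t ht hty
      | @tail z w hz hstep ihB =>
        intro t ht htw
        have hzq : z ∈ Set.Iio q := hstep.1
        have hwq : w ∈ Set.Iio q := hstep.2.1
        have hm := ihB (mbelow z) (mbelow_mem_IQ hfin z) (mbelow_le hfin z)
        refine hm.trans ?_
        rcases hstep.2.2 with hzw | hwz
        · exact claimA w hwq (mbelow z) (mbelow_mem_IQ hfin z)
            ((mbelow_le hfin z).trans hzw) t ht htw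
        · exact claimA z hzq (mbelow z) (mbelow_mem_IQ hfin z)
            (mbelow_le hfin z) t ht (htw.trans hwz)
    -- connecting to the top when q ∈ IQ
    have connTop : q ∈ IQ Q → ∀ s, s ∈ IQ Q → s ≤ q →
        Relation.ReflTransGen (SZag q) s q := by
      intro hq s hs hsq
      rcases eq_or_lt_of_le hsq with h | h
      · exact h ▸ .refl
      · have hmem := mu_mem hfin h
        have hrel : SRel (mu q s) q :=
          ⟨mu_isMin hfin h, mu_lt hfin h, hq, s, h, rfl⟩
        have hIQm : mu q s ∈ IQ Q := isMin_mem_IQ (mu_isMin hfin h)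
        have h1 : Relation.ReflTransGen (SZag q) (mu q s) s :=
          claimB (mu q s) s hmem.1 hmem.2 (mu q s) hIQm (le_refl _) s hs (le_refl _)
        exact (rtg_szag_symm h1).tail ⟨hIQm, hq, (mu_lt hfin h).le, le_refl q,
          Or.inr (Or.inl hrel)⟩
    intro s hs hsq t ht htq
    by_cases hq : q ∈ IQ Q
    · exact (connTop hq s hs hsq).trans (rtg_szag_symm (connTop hq t ht htq))
    · have hconn : PosetConn (Set.Iio q) := not_not.mp hq
      have hsq' : s < q := lt_of_le_of_ne hsq (fun h => hq (h ▸ hs))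
      have htq' : t < q := lt_of_le_of_ne htq (fun h => hq (h ▸ ht))
      exact claimB s t hsq' (hconn.2 s hsq' t htq') s hs (le_refl s) t ht (le_refl t)

end


/-- canonical object of the comma category -/
def mkO (q a : Q) (ha : a ∈ IQ Q) (hle : a ≤ q) : CostructuredArrow (GS Q) q :=
  CostructuredArrow.mk (Y := ⟨a, ha⟩) (homOfLE (show (GS Q).obj ⟨a, ha⟩ ≤ q from hle))

lemma obj_eq_mkO {q : Q} (o : CostructuredArrow (GS Q) q) :
    o = mkO q o.left.1 o.left.2 (leOfHom o.hom) := by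
  rw [CostructuredArrow.eq_mk o]
  rfl

lemma zigzag_of_rtg {q a b : Q} (h : Relation.ReflTransGen (SZag q) a b) :
    ∀ (ha : a ∈ IQ Q) (hlea : a ≤ q) (hb : b ∈ IQ Q) (hleb : b ≤ q),
      Zigzag (mkO q a ha hlea) (mkO q b hb hleb) := by
  induction h with
  | refl => intros; exact Relation.ReflTransGen.refl
  | @tail x y hax hstep ih =>
    intro ha hlea hb hleb
    have hx : x ∈ IQ Q := hstep.1
    have hlex : x ≤ q := hstep.2.2.1
    refine (ih ha hlea hx hlex).trans ?_
    rcases hstep.2.2.2.2 with heq | hrel | hrel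
    · subst heq; exact Relation.ReflTransGen.refl
    · exact Relation.ReflTransGen.single (Or.inl
        ⟨CostructuredArrow.homMk (PLift.up (Or.inr hrel)) (Subsingleton.elim _ _)⟩)
    · exact Relation.ReflTransGen.single (Or.inr
        ⟨CostructuredArrow.homMk (PLift.up (Or.inr hrel)) (Subsingleton.elim _ _)⟩)

theorem GS_initial (hfin : ∀ q : Q, (Set.Iic q).Finite) : (GS Q).Initial := by
  constructor
  intro q
  have hne : Nonempty (CostructuredArrow (GS Q) q) :=
    ⟨mkO q (mbelow q) (mbelow_mem_IQ hfin q) (mbelow_le hfin q)⟩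
  refine zigzag_isConnected (fun o1 o2 => ?_)
  rw [obj_eq_mkO o1, obj_eq_mkO o2]
  exact zigzag_of_rtg
    (connAux hfin ((hfin q).toFinset.card) q le_rfl _ o1.left.2 (leOfHom o1.hom)
      _ o2.left.2 (leOfHom o2.hom)) _ _ _ _


section Rev
variable {Q : Type} [PartialOrder Q]
variable {C : Type} [SmallCategory C] (F : C ⥤ Q) [F.Initial]

lemma IQ_sub_range : IQ Q ⊆ Set.range F.obj := by
  intro q hq
  by_contra hrange
  apply hq
  have himg : ∀ o : CostructuredArrow F q, F.obj o.left ∈ Set.Iio q := by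
    intro o
    refine lt_of_le_of_ne (leOfHom o.hom) (fun h => hrange ⟨o.left, h⟩)
  have hne : Nonempty (CostructuredArrow F q) := (Functor.Initial.out (F := F) q).is_nonempty
  obtain ⟨o0⟩ := hne
  refine ⟨⟨F.obj o0.left, himg o0⟩, ?_⟩
  intro a ha b hb
  obtain ⟨ca⟩ : Nonempty (CostructuredArrow F a) := (Functor.Initial.out (F := F) a).is_nonempty
  obtain ⟨cb⟩ : Nonempty (CostructuredArrow F b) := (Functor.Initial.out (F := F) b).is_nonempty
  have hca : F.obj ca.left ≤ a := leOfHom ca.hom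
  have hcb : F.obj cb.left ≤ b := leOfHom cb.hom
  set oa : CostructuredArrow F q := CostructuredArrow.mk (homOfLE (hca.trans ha.le))
  set ob : CostructuredArrow F q := CostructuredArrow.mk (homOfLE (hcb.trans hb.le))
  have hz : Zigzag oa ob := isPreconnected_zigzag oa ob
  have hmap : Relation.ReflTransGen (StepIn (Set.Iio q) (· ≤ ·))
      (F.obj oa.left) (F.obj ob.left) := by
    refine Relation.ReflTransGen.lift (fun o : CostructuredArrow F q => F.obj o.left) ?_ _ _ hz
    intro o o' hzag
    show StepIn (Set.Iio q) (· ≤ ·) (F.obj o.left) (F.obj o'.left)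
    rcases hzag with ⟨⟨g⟩⟩ | ⟨⟨g⟩⟩
    · exact ⟨himg o, himg o', Or.inl (leOfHom (F.map g.left))⟩
    · exact ⟨himg o, himg o', Or.inr (leOfHom (F.map g.left))⟩
  have h1 : StepIn (Set.Iio q) (· ≤ ·) a (F.obj oa.left) := ⟨ha, himg oa, Or.inr hca⟩
  have h2 : StepIn (Set.Iio q) (· ≤ ·) (F.obj ob.left) b := ⟨himg ob, hb, Or.inl hcb⟩
  exact ((Relation.ReflTransGen.single h1).trans hmap).trans (.single h2)

variable (hfin : ∀ q : Q, (Set.Iic q).Finite)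
include hfin

lemma crossing {q x : Q} (hq : q ∈ IQ Q) (hx : x < q) :
    ∃ (a b : C) (f : a ⟶ b), F.obj b = q ∧ F.obj a ∈ KK q x := by
  obtain ⟨cq, hcq⟩ := IQ_sub_range F hq
  have hmx : mbelow x ∈ IQ Q := mbelow_mem_IQ hfin x
  obtain ⟨cm, hcm⟩ := IQ_sub_range F hmx
  have hmle : F.obj cm ≤ x := hcm.le.trans (mbelow_le hfin x)
  set om : CostructuredArrow F q := CostructuredArrow.mk (homOfLE (hmle.trans hx.le))
  set oq : CostructuredArrow F q := CostructuredArrow.mk (homOfLE hcq.le)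
  have hz : Zigzag om oq := isPreconnected_zigzag om oq
  have key : ∀ (o : CostructuredArrow F q), Zigzag o oq → F.obj o.left ∈ KK q x →
      ∃ (a b : C) (f : a ⟶ b), F.obj b = q ∧ F.obj a ∈ KK q x := by
    intro o hzz
    induction hzz using Relation.ReflTransGen.head_induction_on with
    | refl =>
      intro hmem
      exact absurd (KK_sub_Iio hmem) (by simp [oq, hcq])
    | @head o o₁ hzag hrest ih =>
      intro hmem
      by_cases himg : F.obj o₁.left = q
      · rcases hzag with ⟨⟨g⟩⟩ | ⟨⟨g⟩⟩
        · exact ⟨o.left, o₁.left, g.left, himg, hmem⟩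
        · have : q ≤ F.obj o.left := le_of_eq_of_le himg.symm (leOfHom (F.map g.left))
          exact absurd (lt_of_lt_of_le (KK_sub_Iio hmem) this) (lt_irrefl _)
      · apply ih
        have ho₁ : F.obj o₁.left ∈ Set.Iio q := lt_of_le_of_ne (leOfHom o₁.hom) himg
        rcases hzag with ⟨⟨g⟩⟩ | ⟨⟨g⟩⟩
        · exact KK_of_step hmem ⟨ho₁, KK_sub_Iio hmem, Or.inr (leOfHom (F.map g.left))⟩
        · exact KK_of_step hmem ⟨ho₁, KK_sub_Iio hmem, Or.inl (leOfHom (F.map g.left))⟩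
  refine key om hz ?_
  have h1 : F.obj om.left ∈ Set.Iio q := hmle.trans_lt hx
  exact ⟨h1, Relation.ReflTransGen.single ⟨h1, hx, Or.inl hmle⟩⟩

end Rev

end Stmt18

open Stmt18 in
/-- Let `Q` be a poset with finite downsets whose set of elements with disconnected
strict downset is finite, and let `F : C ⥤ Q` be a minimal initial functor: among all
initial functors into `Q`, `C` has the minimum number of objects and of morphisms.
Then `F` is faithful and injective on objects, and its image is an initial scaffold
of `Q`. -/
theorem stmt18 {Q : Type} [PartialOrder Q]
    (hfin : ∀ q : Q, (Set.Iic q).Finite)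
    (hIQ : {q : Q | ¬ PosetConn (Set.Iio q)}.Finite)
    {C : Type} [SmallCategory C] (F : C ⥤ Q) [F.Initial]
    (hmin : ∀ (C' : Type) [SmallCategory C'] (F' : C' ⥤ Q), F'.Initial →
      Cardinal.mk C ≤ Cardinal.mk C' ∧
      Cardinal.mk (Σ a b : C, a ⟶ b) ≤ Cardinal.mk (Σ a b : C', a ⟶ b)) :
    F.Faithful ∧ Function.Injective F.obj ∧
      IsScaffold (Set.range F.obj)
        (fun x y => x ≠ y ∧ ∃ (a b : C) (_ : a ⟶ b), F.obj a = x ∧ F.obj b = y) := by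
  classical
  -- sigma projections
  have pr1 : ∀ {s t : Σ a b : C, a ⟶ b}, s = t → s.1 = t.1 := fun h => by rw [h]
  have pr2 : ∀ {s t : Σ a b : C, a ⟶ b}, s = t → s.2.1 = t.2.1 := fun h => by rw [h]
  -- finiteness of the scaffold category
  haveI instS : Finite ↥(SOb Q) := Set.Finite.to_subtype hIQ
  have homS_ss : ∀ a b : ↥(SOb Q), Subsingleton (a ⟶ b) :=
    fun a b => inferInstanceAs (Subsingleton (PLift _))
  haveI homS_fin : ∀ a b : ↥(SOb Q), Finite (a ⟶ b) :=
    fun a b => @Finite.of_subsingleton _ (homS_ss a b)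
  haveI finHomS : Finite (Σ a b : ↥(SOb Q), a ⟶ b) := inferInstance
  obtain ⟨hobj, hhom⟩ := hmin ↥(SOb Q) (GS Q) (GS_initial hfin)
  haveI finC : Finite C :=
    Cardinal.mk_lt_aleph0_iff.mp (hobj.trans_lt (Cardinal.mk_lt_aleph0_iff.mpr instS))
  haveI finHomC : Finite (Σ a b : C, a ⟶ b) :=
    Cardinal.mk_lt_aleph0_iff.mp (hhom.trans_lt (Cardinal.mk_lt_aleph0_iff.mpr finHomS))
  -- the pairs type
  set PSet : Set (Q × Q) :=
    {p | p.2 ∈ IQ Q ∧ p.1 < p.2 ∧ mu p.2 p.1 = p.1} with hPSet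
  haveI finP : Finite ↥PSet := by
    refine Set.Finite.to_subtype (Set.Finite.subset
      (Set.Finite.prod (Set.Finite.biUnion hIQ (fun q _ => hfin q)) hIQ) ?_)
    rintro ⟨u, v⟩ ⟨h1, h2, h3⟩
    exact ⟨Set.mem_biUnion h1 h2.le, h1⟩
  -- objects: bijection with the scaffold objects
  have hjex : ∀ s : ↥(SOb Q), ∃ c : C, F.obj c = s.1 := fun s => IQ_sub_range F s.2
  set j : ↥(SOb Q) → C := fun s => (hjex s).choose with hjdef
  have hj : ∀ s, F.obj (j s) = s.1 := fun s => (hjex s).choose_spec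
  have hjinj : Function.Injective j := fun s t h => Subtype.ext (by rw [← hj s, ← hj t, h])
  have hcard1 : Nat.card ↥(SOb Q) ≤ Nat.card C := Nat.card_le_card_of_injective j hjinj
  have hcard2 : Nat.card C ≤ Nat.card ↥(SOb Q) :=
    Cardinal.toNat_le_toNat hobj (Cardinal.mk_lt_aleph0_iff.mpr instS)
  have hjbij : Function.Bijective j :=
    (Nat.bijective_iff_injective_and_card j).mpr ⟨hjinj, le_antisymm hcard1 hcard2⟩
  have himgIQ : ∀ c : C, F.obj c ∈ IQ Q := fun c => by
    obtain ⟨s, rfl⟩ := hjbij.2 c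
    rw [hj]; exact s.2
  have hFinj : Function.Injective F.obj := by
    intro c c' h
    obtain ⟨s, rfl⟩ := hjbij.2 c
    obtain ⟨t, rfl⟩ := hjbij.2 c'
    rw [hj s, hj t] at h
    exact congrArg j (Subtype.ext h)
  -- chosen crossing morphisms
  have hcrossP : ∀ p : ↥PSet, ∃ s : Σ a b : C, a ⟶ b,
      F.obj s.2.1 = p.1.2 ∧ F.obj s.1 ∈ KK p.1.2 p.1.1 := by
    intro p
    obtain ⟨a, b, f, h1, h2⟩ := crossing F hfin p.2.1 p.2.2.1
    exact ⟨⟨a, b, f⟩, h1, h2⟩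
  set gc : ↥PSet → (Σ a b : C, a ⟶ b) := fun p => (hcrossP p).choose with hgcdef
  have hgc : ∀ p, F.obj (gc p).2.1 = p.1.2 ∧ F.obj (gc p).1 ∈ KK p.1.2 p.1.1 :=
    fun p => (hcrossP p).choose_spec
  -- uniqueness of pairs
  have puniq : ∀ p p' : ↥PSet, p.1.2 = p'.1.2 →
      ∀ y, y ∈ KK p.1.2 p.1.1 → y ∈ KK p.1.2 p'.1.1 → p = p' := by
    intro p p' h2 y hy hy'
    have hK : KK p.1.2 p.1.1 = KK p.1.2 p'.1.1 :=
      (KK_eq_of_mem hy).symm.trans (KK_eq_of_mem hy')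
    have h1 : p.1.1 = p'.1.1 := by
      have e1 : mu p.1.2 p.1.1 = p.1.1 := p.2.2.2
      have e2 : mu p'.1.2 p'.1.1 = p'.1.1 := p'.2.2.2
      rw [← e1, ← e2, ← h2]
      show pickMin (KK p.1.2 p.1.1) p.1.2 = pickMin (KK p.1.2 p'.1.1) p.1.2
      rw [hK]
    exact Subtype.ext (Prod.ext_iff.mpr ⟨h1, h2⟩)
  -- the injection Φ
  set Φ : C ⊕ ↥PSet → (Σ a b : C, a ⟶ b) :=
    Sum.elim (fun c => ⟨c, c, 𝟙 c⟩) gc with hΦdef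
  have hΦinj : Function.Injective Φ := by
    rintro (c | p) (c' | p') h <;>
      rw [hΦdef] at h <;> simp only [Sum.elim_inl, Sum.elim_inr] at h
    · exact congrArg Sum.inl (pr1 h)
    · exfalso
      have h1 : c = (gc p').1 := pr1 h
      have h2 : c = (gc p').2.1 := pr2 h
      have := (hgc p').2
      rw [← h1] at this
      have hlt : F.obj c < p'.1.2 := KK_sub_Iio this
      rw [← (hgc p').1, ← h2] at hlt
      exact lt_irrefl _ hlt
    · exfalso
      have h1 : (gc p).1 = c' := pr1 h
      have h2 : (gc p).2.1 = c' := pr2 h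
      have := (hgc p).2
      rw [h1] at this
      have hlt : F.obj c' < p.1.2 := KK_sub_Iio this
      rw [← (hgc p).1, h2] at hlt
      exact lt_irrefl _ hlt
    · refine congrArg Sum.inr ?_
      have hq : p.1.2 = p'.1.2 := by
        rw [← (hgc p).1, ← (hgc p').1, pr2 h]
      refine puniq p p' hq (F.obj (gc p).1) (hgc p).2 ?_
      rw [hq, pr1 h]
      exact (hgc p').2
  -- the injection Ψ
  set Ψ : (Σ a b : ↥(SOb Q), a ⟶ b) → ↥(SOb Q) ⊕ ↥PSet := fun s =>
    if h : s.1 = s.2.1 then Sum.inl s.1 else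
      Sum.inr ⟨(s.1.1, s.2.1.1), by
        have hrel : SRel s.1.1 s.2.1.1 := (s.2.2.down).resolve_left h
        obtain ⟨x, hx, heq⟩ := hrel.2.2.2
        refine ⟨hrel.2.2.1, hrel.2.1, ?_⟩
        rw [heq]
        exact mu_congr (mu_mem hfin hx)⟩ with hΨdef
  have homS_ext : ∀ s t : Σ a b : ↥(SOb Q), a ⟶ b, s.1 = t.1 → s.2.1 = t.2.1 → s = t := by
    rintro ⟨a, b, f⟩ ⟨a', b', f'⟩ h1 h2
    dsimp at h1 h2
    subst h1; subst h2
    have := homS_ss a b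
    rw [Subsingleton.elim f f']
  have hΨinj : Function.Injective Ψ := by
    intro s t h
    rw [hΨdef] at h
    dsimp only at h
    by_cases h1 : s.1 = s.2.1
    · by_cases h2 : t.1 = t.2.1
      · rw [dif_pos h1, dif_pos h2] at h
        have he := Sum.inl.inj h
        exact homS_ext s t he (by rw [← h1, ← h2]; exact he)
      · rw [dif_pos h1, dif_neg h2] at h
        exact absurd h (by simp)
    · by_cases h2 : t.1 = t.2.1
      · rw [dif_neg h1, dif_pos h2] at h
        exact absurd h (by simp)
      · rw [dif_neg h1, dif_neg h2] at h
        have hpair := Subtype.ext_iff.mp (Sum.inr.inj h)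
        exact homS_ext s t (Subtype.ext (congrArg Prod.fst hpair))
          (Subtype.ext (congrArg Prod.snd hpair))
  -- counting
  have hc1 : Nat.card (C ⊕ ↥PSet) ≤ Nat.card (Σ a b : C, a ⟶ b) :=
    Nat.card_le_card_of_injective Φ hΦinj
  have hc2 : Nat.card (Σ a b : C, a ⟶ b) ≤ Nat.card (Σ a b : ↥(SOb Q), a ⟶ b) :=
    Cardinal.toNat_le_toNat hhom (Cardinal.mk_lt_aleph0_iff.mpr finHomS)
  have hc3 : Nat.card (Σ a b : ↥(SOb Q), a ⟶ b) ≤ Nat.card (↥(SOb Q) ⊕ ↥PSet) :=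
    Nat.card_le_card_of_injective Ψ hΨinj
  have hc4 : Nat.card (↥(SOb Q) ⊕ ↥PSet) = Nat.card (C ⊕ ↥PSet) := by
    rw [Nat.card_sum, Nat.card_sum, le_antisymm hcard2 hcard1]
  have hΦbij : Function.Bijective Φ :=
    (Nat.bijective_iff_injective_and_card Φ).mpr
      ⟨hΦinj, le_antisymm hc1 (le_trans (le_trans hc2 hc3) (le_of_eq hc4))⟩
  -- classification of morphisms
  have hclass : ∀ s : Σ a b : C, a ⟶ b, (∃ c, s = ⟨c, c, 𝟙 c⟩) ∨ (∃ p, s = gc p) := by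
    intro s
    obtain ⟨u, hu⟩ := hΦbij.2 s
    rw [hΦdef] at hu
    rcases u with c | p <;> simp only [Sum.elim_inl, Sum.elim_inr] at hu
    · exact Or.inl ⟨c, hu.symm⟩
    · exact Or.inr ⟨p, hu.symm⟩
  have hext3 : ∀ {a b : C} {f f' : a ⟶ b},
      (⟨a, b, f⟩ : Σ a b : C, a ⟶ b) = ⟨a, b, f'⟩ → f = f' := by
    intro a b f f' h
    simpa using h
  have hN1 : ∀ {a b : C} (f : a ⟶ b), a ≠ b → ∃ p : ↥PSet,
      (⟨a, b, f⟩ : Σ a b : C, a ⟶ b) = gc p := by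
    intro a b f hab
    rcases hclass ⟨a, b, f⟩ with ⟨c, hc⟩ | h
    · exact absurd ((pr1 hc).trans (pr2 hc).symm) hab
    · exact h
  -- facts from a nonidentity morphism
  have hN1' : ∀ {a b : C} (f : a ⟶ b), a ≠ b → ∃ p : ↥PSet,
      p.1.2 = F.obj b ∧ F.obj a ∈ KK (F.obj b) p.1.1 ∧
        (⟨a, b, f⟩ : Σ a b : C, a ⟶ b) = gc p := by
    intro a b f hab
    obtain ⟨p, hp⟩ := hN1 f hab
    have e2 : b = (gc p).2.1 := pr2 hp
    have e1 : a = (gc p).1 := pr1 hp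
    have hq : p.1.2 = F.obj b := by rw [e2]; exact ((hgc p).1).symm
    refine ⟨p, hq, ?_, hp⟩
    rw [e1, ← hq]
    exact (hgc p).2
  have himgLt : ∀ {a b : C}, (a ⟶ b) → a ≠ b → F.obj a < F.obj b := by
    intro a b f hab
    obtain ⟨p, hq, hmem, -⟩ := hN1' f hab
    exact KK_sub_Iio hmem
  -- identity classification
  have hN2 : ∀ (a : C) (f : a ⟶ a), f = 𝟙 a := by
    intro a f
    rcases hclass ⟨a, a, f⟩ with ⟨c, hc⟩ | ⟨p, hp⟩
    · have h1 : a = c := pr1 hc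
      subst h1
      exact hext3 hc
    · exfalso
      have e1 : a = (gc p).1 := pr1 hp
      have e2 : a = (gc p).2.1 := pr2 hp
      have hmem := (hgc p).2
      rw [← e1] at hmem
      have hlt : F.obj a < p.1.2 := KK_sub_Iio hmem
      rw [← (hgc p).1, ← e2] at hlt
      exact lt_irrefl _ hlt
  -- hom-sets are subsingletons
  have homC_ss : ∀ a b : C, Subsingleton (a ⟶ b) := by
    intro a b
    constructor
    intro f f'
    by_cases hab : a = b
    · subst hab
      rw [hN2 a f, hN2 a f']
    · obtain ⟨p, hq, hmem, hp⟩ := hN1' f hab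
      obtain ⟨p', hq', hmem', hp'⟩ := hN1' f' hab
      have hpp : p = p' := by
        refine puniq p p' (hq.trans hq'.symm) (F.obj a) ?_ ?_
        · rw [hq]; exact hmem
        · rw [hq]; exact hmem'
      rw [hpp] at hp
      exact hext3 (hp.trans hp'.symm)
  -- minimality of sources of nonidentity morphisms
  have hminSource : ∀ {a b : C}, (a ⟶ b) → a ≠ b → IsMin (F.obj a) := by
    intro a b f hab
    obtain ⟨p, hq, hmem, hp⟩ := hN1' f hab
    by_contra hnotmin
    obtain ⟨z, hz⟩ := not_isMin_iff.mp hnotmin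
    have hIQa : F.obj a ∈ IQ Q := himgIQ a
    set p' : ↥PSet := ⟨(mu (F.obj a) z, F.obj a),
      ⟨hIQa, mu_lt hfin hz, mu_congr (mu_mem hfin hz)⟩⟩ with hp'def
    have hb'a : (gc p').2.1 = a := hFinj (hgc p').1
    have ha'mem : F.obj (gc p').1 ∈ KK (F.obj a) z := by
      have := (hgc p').2
      rwa [show p'.1.2 = F.obj a from rfl, show p'.1.1 = mu (F.obj a) z from rfl,
        KK_eq_of_mem (mu_mem hfin hz)] at this
    have ha'lt : F.obj (gc p').1 < F.obj a := KK_sub_Iio ha'mem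
    set f2 : (gc p').1 ⟶ b := (gc p').2.2 ≫ eqToHom hb'a ≫ f with hf2def
    have hne2 : (gc p').1 ≠ b := by
      intro h
      have : F.obj (gc p').1 < F.obj b := ha'lt.trans (himgLt f hab)
      rw [h] at this
      exact lt_irrefl _ this
    obtain ⟨p'', hq'', hmem'', hp''⟩ := hN1' f2 hne2
    have hy2 : F.obj (gc p').1 ∈ KK (F.obj b) p.1.1 := by
      refine KK_of_step hmem ⟨?_, ?_, Or.inl ?_⟩
      · exact ha'lt.trans (himgLt f hab)
      · exact himgLt f hab
      · have := leOfHom (F.map (gc p').2.2)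
        rwa [hb'a] at this
    have hpp : p'' = p := by
      refine puniq p'' p (hq''.trans hq.symm) (F.obj (gc p').1) ?_ ?_
      · rw [hq'']; exact hmem''
      · rw [hq'']; exact hy2
    rw [hpp] at hp''
    have : (gc p').1 = a := (pr1 hp'').trans (pr1 hp).symm
    rw [this] at ha'lt
    exact lt_irrefl _ ha'lt
  -- range equality
  have range_eq : Set.range F.obj = IQ Q := by
    apply Set.eq_of_subset_of_subset
    · rintro _ ⟨c, rfl⟩; exact himgIQ c
    · exact IQ_sub_range F
  -- conclusion
  refine ⟨⟨fun {a b} {f f'} _ => @Subsingleton.elim _ (homC_ss a b) f f'⟩, hFinj, ?_, ?_, ?_⟩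
  · exact range_eq
  · rintro x y ⟨hxy, a, b, f, ha, hb⟩
    subst ha; subst hb
    have hab : a ≠ b := fun h => hxy (congrArg F.obj h)
    exact ⟨hminSource f hab, himgLt f hab, ⟨b, rfl⟩⟩
  · intro y hy x hx
    have hyIQ : y ∈ IQ Q := range_eq ▸ hy
    set p₀ : ↥PSet := ⟨(mu y x, y), ⟨hyIQ, mu_lt hfin hx, mu_congr (mu_mem hfin hx)⟩⟩
      with hp₀def
    have hgc₀ := hgc p₀
    have hmem₀ : F.obj (gc p₀).1 ∈ KK y x := by
      have := hgc₀.2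
      rwa [show p₀.1.2 = y from rfl, show p₀.1.1 = mu y x from rfl,
        KK_eq_of_mem (mu_mem hfin hx)] at this
    refine ⟨F.obj (gc p₀).1, ⟨⟨ne_of_lt (KK_sub_Iio hmem₀), (gc p₀).1, (gc p₀).2.1,
      (gc p₀).2.2, rfl, hgc₀.1⟩, KK_sub_Iio hmem₀, hx, hmem₀.2⟩, ?_⟩
    rintro m' ⟨⟨hne', a', b', f', hFa', hFb'⟩, hsc⟩
    have hab' : a' ≠ b' := by
      intro h
      exact hne' (by rw [← hFa', ← hFb', h])
    obtain ⟨p', hq', hmem', hp'⟩ := hN1' f' hab'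
    have hq'y : p'.1.2 = y := hq'.trans hFb'
    have hm'K : m' ∈ KK y x := ⟨hsc.1, hsc.2.2⟩
    have hm'K' : m' ∈ KK y p'.1.1 := by
      rw [← hFa', ← hFb']
      exact hmem'
    have hpp : p' = p₀ := by
      refine puniq p' p₀ (hq'y.trans rfl) m' ?_ ?_
      · rw [hq'y]; exact hm'K'
      · rw [hq'y, show p₀.1.1 = mu y x from rfl, KK_eq_of_mem (mu_mem hfin hx)]
        exact hm'K
    rw [hpp] at hp'
    rw [← hFa']
    exact congrArg F.obj (pr1 hp')
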